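/- Let M, Y : ℝ → ℝ be differentiable on [0,∞), let C > 0 be a constant, and suppose: M is bounded below on [0,∞); Y(t) ≥ 0 for all t ≥ 0; Y′(t) ≤ 0 for all t ≥ 0; and Y(t) ≤ −M′(t) − C·Y′(t) for all t ≥ 0. Then Y(t) → 0 as t → ∞. (This is the full analytic content of the Gauduchon case of the L² convergence proposition: the finiteness of ∫₀^∞ Y dt together with Y′(t) = −2‖D′(ΛF_θ)‖²_{L²} ≤ 0 implies Y(t) → 0 as t → ∞.) -/

import Mathlib

/-- If `M` is bounded below on `[0,∞)`, `Y ≥ 0` and `Y′ ≤ 0` there, and `Y ≤ −M′ − C·Y′` there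
(with `C > 0`, both functions differentiable on `[0,∞)`), then `Y(t) → 0` as `t → ∞`. -/
theorem stmt_9 (M Y : ℝ → ℝ) (C : ℝ) (hC : 0 < C)
    (hMdiff : ∀ t : ℝ, 0 ≤ t → DifferentiableAt ℝ M t)
    (hYdiff : ∀ t : ℝ, 0 ≤ t → DifferentiableAt ℝ Y t)
    (hMbdd : ∃ B : ℝ, ∀ t : ℝ, 0 ≤ t → B ≤ M t)
    (hYnonneg : ∀ t : ℝ, 0 ≤ t → 0 ≤ Y t)
    (hYderiv : ∀ t : ℝ, 0 ≤ t → deriv Y t ≤ 0)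
    (hineq : ∀ t : ℝ, 0 ≤ t → Y t ≤ -deriv M t - C * deriv Y t) :
    Filter.Tendsto Y Filter.atTop (nhds 0) := by
  obtain ⟨B, hB⟩ := hMbdd
  -- Y is antitone on [0,∞)
  have hYanti : AntitoneOn Y (Set.Ici 0) := by
    apply antitoneOn_of_deriv_nonpos (convex_Ici 0)
    · exact fun t ht => (hYdiff t ht).continuousAt.continuousWithinAt
    · intro t ht
      rw [interior_Ici] at ht
      exact (hYdiff t ht.le).differentiableWithinAt
    · intro t ht
      rw [interior_Ici] at ht
      exact hYderiv t ht.le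
  -- Z is the globalized antitone version of Y
  set Z : ℝ → ℝ := fun t => Y (max t 0) with hZ
  have hZanti : Antitone Z := by
    intro s t hst
    exact hYanti (Set.mem_Ici.2 (le_max_right s 0)) (Set.mem_Ici.2 (le_max_right t 0))
      (max_le_max hst le_rfl)
  have hZnonneg : ∀ t, 0 ≤ Z t := fun t => hYnonneg _ (le_max_right t 0)
  have hZbdd : BddBelow (Set.range Z) := ⟨0, by rintro x ⟨t, rfl⟩; exact hZnonneg t⟩
  set L : ℝ := ⨅ t, Z t with hL
  have hZtend : Filter.Tendsto Z Filter.atTop (nhds L) := tendsto_atTop_ciInf hZanti hZbdd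
  have hLnonneg : 0 ≤ L := le_ciInf fun t => hZnonneg t
  have hLle : ∀ t, L ≤ Z t := fun t => ciInf_le hZbdd t
  have hYeq : Y =ᶠ[Filter.atTop] Z := by
    filter_upwards [Filter.eventually_ge_atTop (0 : ℝ)] with t ht
    simp [hZ, max_eq_left ht]
  -- it suffices to show L = 0
  suffices hL0 : L = 0 by
    rw [← hL0]
    exact hZtend.congr' hYeq.symm
  by_contra hne
  have hLpos : 0 < L := lt_of_le_of_ne hLnonneg (Ne.symm hne)
  have hYgeL : ∀ t : ℝ, 0 ≤ t → L ≤ Y t := by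
    intro t ht
    have := hLle t
    simpa [hZ, max_eq_left ht] using this
  -- H = M + C*Y + L*t is antitone on [0,∞)
  set H : ℝ → ℝ := fun t => M t + C * Y t + L * t with hH
  have hHderiv : ∀ t : ℝ, 0 ≤ t → HasDerivAt H (deriv M t + C * deriv Y t + L) t := by
    intro t ht
    have hid : HasDerivAt (fun y : ℝ => L * y) L t := by
      simpa using (hasDerivAt_id t).const_mul L
    exact (((hMdiff t ht).hasDerivAt.add ((hYdiff t ht).hasDerivAt.const_mul C)).add hid)
  have hHanti : AntitoneOn H (Set.Ici 0) := by
    apply antitoneOn_of_deriv_nonpos (convex_Ici 0)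
    · exact fun t ht => (hHderiv t ht).differentiableAt.continuousAt.continuousWithinAt
    · intro t ht
      rw [interior_Ici] at ht
      exact (hHderiv t ht.le).differentiableAt.differentiableWithinAt
    · intro t ht
      rw [interior_Ici] at ht
      rw [(hHderiv t ht.le).deriv]
      have h1 := hineq t ht.le
      have h2 := hYgeL t ht.le
      linarith
  -- derive contradiction: H t ≥ B + L*t but H t ≤ H 0
  set T : ℝ := (M 0 + C * Y 0 - B) / L + 1 with hT
  have hnumnonneg : 0 ≤ M 0 + C * Y 0 - B := by
    have := hB 0 le_rfl
    have := hYnonneg 0 le_rfl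
    nlinarith
  have hTpos : 0 < T := by positivity
  have hHT : H T ≤ H 0 := hHanti (Set.mem_Ici.2 le_rfl) (Set.mem_Ici.2 hTpos.le) hTpos.le
  have hHlb : B + L * T ≤ M T + C * Y T + L * T := by
    have h1 := hB T hTpos.le
    have h2 := hYnonneg T hTpos.le
    nlinarith
  have hLT : L * T = M 0 + C * Y 0 - B + L := by
    rw [hT, mul_add, mul_div_cancel₀ _ hLpos.ne']
    ring
  simp only [hH, mul_zero, add_zero] at hHT
  linarith
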